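/- Let T be a plane tree with at least one internal node and let T' = swap(T) be its lodestar swap. Then lthorn(T) = lthorn(T') and rthorn(T) = rthorn(T'). -/

import Mathlib

/-! ## Plane trees -/

/-- A plane tree: a root together with an ordered (left-to-right) list of subtrees.
A node is a *leaf* if it has no children, and *internal* otherwise. -/
inductive PTree : Type where
  | node : List PTree → PTree


namespace Luka

/-! ## Łukasiewicz paths

A path is encoded by its list of step increments: the step `(1,k)` (an up-step `U_k` of
degree `k`) is encoded by `k : ℤ` with `k ≥ 0`, and the down step `D = (1,-1)` by `-1`. -/

/-- `P` is a Łukasiewicz path: it is nonempty, uses steps `(1,k)` with `k ≥ -1`,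
stays (weakly) above the `x`-axis before its last step, and ends at height `-1`
(so that it goes strictly below the axis only at the last step, which is forced
to be the down-step `D`). -/
def IsLukas (P : List ℤ) : Prop :=
  P ≠ [] ∧ (∀ s ∈ P, -1 ≤ s) ∧ (∀ n, n < P.length → 0 ≤ (P.take n).sum) ∧ P.sum = -1

/-- The degrees of the up-steps of `P`, from left to right (the *profile* of `P`). -/
def upDegs (P : List ℤ) : List ℕ := (P.filter (fun s => 0 ≤ s)).map Int.toNat

/-- The profile multiset `𝔐(P)`: the multiset of degrees of the up-steps of `P`. -/
def profileM (P : List ℤ) : Multiset ℕ := (upDegs P : Multiset ℕ)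

/-- The degree of the first up-step of `P`, if any. -/
def firstUp? (P : List ℤ) : Option ℕ := (upDegs P).head?

/-- The degree of the last up-step of `P`, if any. -/
def lastUp? (P : List ℤ) : Option ℕ := (upDegs P).getLast?

/-- Auxiliary: starting from height `h`, record the starting height of every up-step. -/
def areaVecAux : ℤ → List ℤ → List ℤ
  | _, [] => []
  | h, s :: rest => (if 0 ≤ s then [h] else []) ++ areaVecAux (h + s) rest

/-- The area vector `Area(P)`: the `i`-th entry is the `y`-coordinate of the starting
point of the `i`-th up-step of `P`. -/
def areaVec (P : List ℤ) : List ℤ := areaVecAux 0 P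

/-- `area(P)`: the sum of the entries of the area vector (entries of a Łukasiewicz
path are nonnegative, so taking `Int.toNat` entrywise is harmless). -/
def area (P : List ℤ) : ℕ := ((areaVec P).map Int.toNat).sum

/-- Auxiliary computation of the depth values: `cur` is the depth value of the previous
step (`0` initially), and `stack` holds the pending depth values of the future matching
down-steps (top of the stack = value for the next matching down-step to come).
Reading an up-step `U_k` whose value is `cur` (inherited from the previous step) pushes
the values `cur+1, …, cur+k` for its `k` matching down-steps (its first matching
down-step, which crosses its topmost interior level, gets `cur+1`, etc.); reading a
down-step pops its value.  The list returned records the value `d_i` of each up-step,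
from left to right. -/
def depthVecAux : ℕ → List ℕ → List ℤ → List ℕ
  | _, _, [] => []
  | cur, stack, s :: rest =>
    if 0 ≤ s then
      cur :: depthVecAux cur ((List.range s.toNat).map (fun i => cur + i + 1) ++ stack) rest
    else
      match stack with
      | [] => depthVecAux cur [] rest
      | v :: st => depthVecAux v st rest

/-- The depth vector `Depth(P)`: the values `d_i` at the up-steps of `P`, left to right. -/
def depthVec (P : List ℤ) : List ℕ := depthVecAux 0 [] P

/-- `depth(P)`: the sum of the entries of the depth vector. -/
def depth (P : List ℤ) : ℕ := (depthVec P).sum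

/-- `P ∈ 𝓛_M`. -/
def MemL (M : Multiset ℕ) (P : List ℤ) : Prop := IsLukas P ∧ profileM P = M

/-- `P ∈ 𝓛_{a,M}`: first up-step of degree `a`, profile multiset `M ⊎ {a}`. -/
def MemLa (a : ℕ) (M : Multiset ℕ) (P : List ℤ) : Prop :=
  IsLukas P ∧ firstUp? P = some a ∧ profileM P = a ::ₘ M

/-- `P ∈ 𝓛_{M,b}`: last up-step of degree `b`, profile multiset `M ⊎ {b}`. -/
def MemLb (M : Multiset ℕ) (b : ℕ) (P : List ℤ) : Prop :=
  IsLukas P ∧ lastUp? P = some b ∧ profileM P = b ::ₘ M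

/-- `P ∈ 𝓛_{a,M,b}`: first up-step of degree `a`, last up-step of degree `b`,
profile multiset `M ⊎ {a, b}`. -/
def MemLab (a : ℕ) (M : Multiset ℕ) (b : ℕ) (P : List ℤ) : Prop :=
  IsLukas P ∧ firstUp? P = some a ∧ lastUp? P = some b ∧ profileM P = a ::ₘ b ::ₘ M

/-! ## Plane-tree statistics -/

/-- The (ordered) children of the root of a plane tree. -/
def children : PTree → List PTree
  | .node ts => ts

/-- The degree of (the root of) a plane tree: its number of children. -/
def numChildren (t : PTree) : ℕ := (children t).length

mutual
/-- Number of internal nodes of a plane tree. -/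
def internCount : PTree → ℕ
  | .node [] => 0
  | .node (t :: ts) => 1 + internCountL (t :: ts)
def internCountL : List PTree → ℕ
  | [] => 0
  | t :: ts => internCount t + internCountL ts
end

mutual
/-- `lthornT T` = the sum of `lthorn(u)` over all internal nodes `u` of `T`, where
`lthorn(u)` is the number of descending edges of strict ancestors `v` of `u` lying to
the left of the path from `v` to `u`.  (Every internal node of the subtree rooted at
the `i`-th child (0-indexed) of a node gains `i` left thorns from that node.) -/
def lthornT : PTree → ℕ
  | .node ts => lthornL 0 ts
def lthornL : ℕ → List PTree → ℕ
  | _, [] => 0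
  | i, t :: ts => lthornT t + i * internCount t + lthornL (i + 1) ts
end

mutual
/-- `rthornT T` = the sum of `rthorn(u)` over all internal nodes `u` of `T`, where
`rthorn(u)` is the number of descending edges of strict ancestors `v` of `u` lying to
the right of the path from `v` to `u`. -/
def rthornT : PTree → ℕ
  | .node ts => rthornL ts
def rthornL : List PTree → ℕ
  | [] => 0
  | t :: ts => rthornT t + ts.length * internCount t + rthornL ts
end

mutual
/-- The list of the values `lthorn(u)` for the internal nodes `u` of `T`, in
contour-walk (preorder) order. -/
def lthornList : PTree → List ℕ
  | .node [] => []
  | .node (t :: ts) => 0 :: lthornLL 0 (t :: ts)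
def lthornLL : ℕ → List PTree → List ℕ
  | _, [] => []
  | i, t :: ts => (lthornList t).map (· + i) ++ lthornLL (i + 1) ts
end

mutual
/-- The list of the values `rthorn(u)` for the internal nodes `u` of `T`, in
contour-walk (preorder) order. -/
def rthornList : PTree → List ℕ
  | .node [] => []
  | .node (t :: ts) => 0 :: rthornLL (t :: ts)
def rthornLL : List PTree → List ℕ
  | [] => []
  | t :: ts => (rthornList t).map (· + ts.length) ++ rthornLL ts
end

/-! ## The bijections `λ` and `τ` -/

mutual
/-- `λ`: record each node of the tree at its first visit in the left-to-right contour
walk: `U_k` (i.e. `k`) for an internal node with `k+1` children, `D` (i.e. `-1`)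
for a leaf. -/
def lambdaT : PTree → List ℤ
  | .node ts => ((ts.length : ℤ) - 1) :: lambdaL ts
def lambdaL : List PTree → List ℤ
  | [] => []
  | t :: ts => lambdaT t ++ lambdaL ts
end

/-- Auxiliary for `τ`: reading the path from right to left, maintain the stack of the
already-built subtrees (in left-to-right order); a down-step `D` creates a leaf and an
up-step `U_k` grabs the `k+1` topmost subtrees as its children.  This builds the same
tree as the left-to-right "leftmost bud" construction. -/
def tauStack (P : List ℤ) : List PTree :=
  P.foldr (fun s st =>
    if s < 0 then PTree.node [] :: st
    else PTree.node (st.take (s.toNat + 1)) :: st.drop (s.toNat + 1)) []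

/-- `τ`: the plane tree associated with a Łukasiewicz path. -/
def tau (P : List ℤ) : PTree := (tauStack P).headD (.node [])

mutual
/-- The mirror of a plane tree: reverse the left-to-right order of the children of
every internal node. -/
def mir : PTree → PTree
  | .node ts => .node (mirL ts).reverse
def mirL : List PTree → List PTree
  | [] => []
  | t :: ts => mir t :: mirL ts
end

mutual
/-- The subtrees rooted at the internal nodes of `T`, in contour-walk (preorder)
order. -/
def internalSubtrees : PTree → List PTree
  | .node [] => []
  | .node (t :: ts) => .node (t :: ts) :: internalSubtreesL (t :: ts)
def internalSubtreesL : List PTree → List PTree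
  | [] => []
  | t :: ts => internalSubtrees t ++ internalSubtreesL ts
end

/-- The multiset of degrees of the non-root internal nodes of `T`. -/
def nonRootInternalDegs (T : PTree) : Multiset ℕ :=
  (((internalSubtreesL (children T)).map numChildren : List ℕ) : Multiset ℕ)

/-! ## Lodestars and the lodestar swap -/

/-- A node is a lodestar-type node if it is internal and all its children are leaves. -/
def isLodestarNode (t : PTree) : Bool :=
  !(children t).isEmpty && (children t).all (fun c => (children c).isEmpty)

mutual
/-- The subtree rooted at the *left lodestar* of `T`: the first internal node, in
contour-walk (preorder) order, all of whose children are leaves (if it exists). -/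
def leftLode? : PTree → Option PTree
  | .node ts =>
    if isLodestarNode (.node ts) then some (.node ts) else leftLodeL? ts
def leftLodeL? : List PTree → Option PTree
  | [] => none
  | t :: ts =>
    match leftLode? t with
    | some r => some r
    | none => leftLodeL? ts
end

mutual
/-- The subtree rooted at the *right lodestar* of `T`: the last internal node, in
contour-walk (preorder) order, all of whose children are leaves (if it exists). -/
def rightLode? : PTree → Option PTree
  | .node ts =>
    match rightLodeL? ts with
    | some r => some r
    | none => if isLodestarNode (.node ts) then some (.node ts) else none
def rightLodeL? : List PTree → Option PTree
  | [] => none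
  | t :: ts =>
    match rightLodeL? ts with
    | some r => some r
    | none => rightLode? t
end

mutual
/-- Replace the left lodestar of `T` (first preorder all-leaf-children internal node)
by the tree `r`; `none` if `T` has no internal node. -/
def replF : PTree → PTree → Option PTree
  | r, .node ts =>
    if isLodestarNode (.node ts) then some r
    else (replFL r ts).map PTree.node
def replFL : PTree → List PTree → Option (List PTree)
  | _, [] => none
  | r, t :: ts =>
    match replF r t with
    | some t' => some (t' :: ts)
    | none => (replFL r ts).map (t :: ·)
end

mutual
/-- Replace the right lodestar of `T` (last preorder all-leaf-children internal node)
by the tree `r`; `none` if `T` has no internal node. -/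
def replL : PTree → PTree → Option PTree
  | r, .node ts =>
    match replLL r ts with
    | some ts' => some (.node ts')
    | none => if isLodestarNode (.node ts) then some r else none
def replLL : PTree → List PTree → Option (List PTree)
  | _, [] => none
  | r, t :: ts =>
    match replLL r ts with
    | some ts' => some (t :: ts')
    | none => (replL r t).map (· :: ts)
end

/-- The lodestar swap: exchange the subtrees rooted at the left lodestar and the
right lodestar of `T` (each a node together with its pendant leaves). -/
def lodeSwap (T : PTree) : PTree :=
  match leftLode? T, rightLode? T with
  | some L, some R => ((replF R T).bind (replL L)).getD T
  | _, _ => T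

/-! ### Auxiliary lemmas for Proposition 4.4 -/

/-- Good stats: a lodestar-type replacement tree. -/
def GoodStats (r : PTree) : Prop :=
  internCount r = 1 ∧ lthornT r = 0 ∧ rthornT r = 0

lemma allLeaves_stats (ts : List PTree) (h : ∀ c ∈ ts, children c = []) :
    internCountL ts = 0 ∧ (∀ i, lthornL i ts = 0) ∧ rthornL ts = 0 := by
  induction ts with
  | nil => simp [internCountL, lthornL, rthornL]
  | cons t ts ih =>
    obtain ⟨cs⟩ := t
    have hc : cs = [] := by
      have := h (PTree.node cs) List.mem_cons_self
      simpa [children] using this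
    subst hc
    have ih' := ih (fun c hc => h c (by simp [hc]))
    refine ⟨?_, fun i => ?_, ?_⟩
    · simp [internCountL, internCount, ih'.1]
    · simp [lthornL, lthornT, internCount, ih'.2.1, lthornL]
    · simp [rthornL, rthornT, internCount, ih'.2.2, rthornL]

lemma lodestar_goodStats (t : PTree) (h : isLodestarNode t = true) : GoodStats t := by
  obtain ⟨ts⟩ := t
  simp only [isLodestarNode, children, Bool.and_eq_true, Bool.not_eq_true',
    List.isEmpty_eq_false_iff_exists_mem, List.all_eq_true] at h
  have hne : ts ≠ [] := by
    rcases h.1 with ⟨x, hx⟩; intro hE; simp [hE] at hx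
  have hall : ∀ c ∈ ts, children c = [] := by
    intro c hc; have := h.2 c hc; cases c; simpa [List.isEmpty_iff, children] using this
  have hs := allLeaves_stats ts hall
  obtain ⟨t0, ts0, rfl⟩ := List.exists_cons_of_ne_nil hne
  refine ⟨?_, ?_, ?_⟩
  · simp [internCount, hs.1]
  · simp [lthornT, hs.2.1]
  · simp [rthornT, hs.2.2]

mutual
theorem leftLode?_lodestar : ∀ T L, leftLode? T = some L → isLodestarNode L = true
  | .node ts, L, h => by
    rw [leftLode?] at h
    split at h
    · cases h; assumption
    · exact leftLodeL?_lodestar ts L h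
theorem leftLodeL?_lodestar : ∀ ts L, leftLodeL? ts = some L → isLodestarNode L = true
  | t :: ts, L, h => by
    rw [leftLodeL?] at h
    split at h
    · cases h; exact leftLode?_lodestar t L (by assumption)
    · exact leftLodeL?_lodestar ts L h
end

mutual
theorem rightLode?_lodestar : ∀ T L, rightLode? T = some L → isLodestarNode L = true
  | .node ts, L, h => by
    rw [rightLode?] at h
    split at h
    · cases h; exact rightLodeL?_lodestar ts L (by assumption)
    · split at h
      · cases h; assumption
      · exact absurd h (by simp)
theorem rightLodeL?_lodestar : ∀ ts L, rightLodeL? ts = some L → isLodestarNode L = true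
  | t :: ts, L, h => by
    rw [rightLodeL?] at h
    split at h
    · cases h; exact rightLodeL?_lodestar ts L (by assumption)
    · exact rightLode?_lodestar t L h
end

lemma internCount_node (l : List PTree) (h : l ≠ []) :
    internCount (.node l) = 1 + internCountL l := by
  obtain ⟨t, ts, rfl⟩ := List.exists_cons_of_ne_nil h
  rfl

mutual
theorem replF_stats : ∀ r T T', GoodStats r → replF r T = some T' →
    internCount T' = internCount T ∧ lthornT T' = lthornT T ∧ rthornT T' = rthornT T
  | r, .node ts, T', hr, h => by
    rw [replF] at h
    split at h
    · cases h
      have hg := lodestar_goodStats (.node ts) (by assumption)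
      exact ⟨hr.1.trans hg.1.symm, hr.2.1.trans hg.2.1.symm, hr.2.2.trans hg.2.2.symm⟩
    · rw [Option.map_eq_some_iff] at h
      obtain ⟨ts', hts', rfl⟩ := h
      obtain ⟨hlen, hic, hl, hrt⟩ := replFL_stats r ts ts' hr hts'
      have hne : ts ≠ [] := by
        intro hE; subst hE; simp [replFL] at hts'
      have hne' : ts' ≠ [] := by
        intro hE; subst hE; simp at hlen; exact hne (List.length_eq_zero_iff.mp hlen.symm)
      refine ⟨?_, ?_, ?_⟩
      · rw [internCount_node _ hne, internCount_node _ hne', hic]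
      · simpa [lthornT] using hl 0
      · simpa [rthornT] using hrt
theorem replFL_stats : ∀ r ts ts', GoodStats r → replFL r ts = some ts' →
    ts'.length = ts.length ∧ internCountL ts' = internCountL ts ∧
    (∀ i, lthornL i ts' = lthornL i ts) ∧ rthornL ts' = rthornL ts
  | r, t :: ts, ts', hr, h => by
    rw [replFL] at h
    split at h
    · cases h
      rename_i t' ht'
      obtain ⟨hic, hl, hrt⟩ := replF_stats r t t' hr ht'
      refine ⟨by simp, by simp [internCountL, hic], fun i => by simp [lthornL, hic, hl], ?_⟩
      simp [rthornL, hic, hrt]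
    · rw [Option.map_eq_some_iff] at h
      obtain ⟨tl', htl', rfl⟩ := h
      obtain ⟨hlen, hic, hl, hrt⟩ := replFL_stats r ts tl' hr htl'
      refine ⟨by simp [hlen], by simp [internCountL, hic], fun i => ?_, ?_⟩
      · simp [lthornL, hl]
      · simp [rthornL, hrt, hlen]
end

mutual
theorem replL_stats : ∀ r T T', GoodStats r → replL r T = some T' →
    internCount T' = internCount T ∧ lthornT T' = lthornT T ∧ rthornT T' = rthornT T
  | r, .node ts, T', hr, h => by
    rw [replL] at h
    split at h
    · cases h
      rename_i ts' hts'
      obtain ⟨hlen, hic, hl, hrt⟩ := replLL_stats r ts ts' hr hts'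
      have hne : ts ≠ [] := by
        intro hE; subst hE; simp [replLL] at hts'
      have hne' : ts' ≠ [] := by
        intro hE; subst hE; simp at hlen; exact hne (List.length_eq_zero_iff.mp hlen.symm)
      refine ⟨?_, ?_, ?_⟩
      · rw [internCount_node _ hne, internCount_node _ hne', hic]
      · simpa [lthornT] using hl 0
      · simpa [rthornT] using hrt
    · split at h
      · cases h
        have hg := lodestar_goodStats (.node ts) (by assumption)
        exact ⟨hr.1.trans hg.1.symm, hr.2.1.trans hg.2.1.symm, hr.2.2.trans hg.2.2.symm⟩
      · exact absurd h (by simp)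
theorem replLL_stats : ∀ r ts ts', GoodStats r → replLL r ts = some ts' →
    ts'.length = ts.length ∧ internCountL ts' = internCountL ts ∧
    (∀ i, lthornL i ts' = lthornL i ts) ∧ rthornL ts' = rthornL ts
  | r, t :: ts, ts', hr, h => by
    rw [replLL] at h
    split at h
    · cases h
      rename_i tl' htl'
      obtain ⟨hlen, hic, hl, hrt⟩ := replLL_stats r ts tl' hr htl'
      refine ⟨by simp [hlen], by simp [internCountL, hic], fun i => ?_, ?_⟩
      · simp [lthornL, hl]
      · simp [rthornL, hrt, hlen]
    · rw [Option.map_eq_some_iff] at h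
      obtain ⟨t', ht', rfl⟩ := h
      obtain ⟨hic, hl, hrt⟩ := replL_stats r t t' hr ht'
      refine ⟨by simp, by simp [internCountL, hic], fun i => by simp [lthornL, hic, hl], ?_⟩
      simp [rthornL, hic, hrt]
end

end Luka

open Luka in
/-- **Proposition 4.4.**  Let `T` be a plane tree with at least one internal node
(i.e. `T` is not a single leaf) and `T' = swap(T)` its lodestar swap.  Then
`lthorn(T) = lthorn(T')` and `rthorn(T) = rthorn(T')`. -/
theorem lthorn_rthorn_lodeSwap (T : PTree) (hT : T ≠ .node []) :
    lthornT T = lthornT (lodeSwap T) ∧ rthornT T = rthornT (lodeSwap T) := by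
  unfold lodeSwap
  rcases hL : leftLode? T with _ | L
  · simp
  rcases hR : rightLode? T with _ | R
  · simp
  simp only
  rcases h1 : replF R T with _ | T1
  · simp
  rcases h2 : replL L T1 with _ | T2
  · simp [h2]
  simp only [Option.bind_some, h2, Option.getD_some]
  have hgR := lodestar_goodStats R (rightLode?_lodestar T R hR)
  have hgL := lodestar_goodStats L (leftLode?_lodestar T L hL)
  obtain ⟨_, hl1, hr1⟩ := replF_stats R T T1 hgR h1
  obtain ⟨_, hl2, hr2⟩ := replL_stats L T1 T2 hgL h2
  exact ⟨(hl2.trans hl1).symm, (hr2.trans hr1).symm⟩
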